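/- The family {R_ν}, where R_ν(ρ) = inf_{Λ ∈ O} ‖Λ(ν) − ρ‖₁ and ν ranges over all density matrices, is a complete set of resource monotones: for any density matrices ρ and σ, the conversion ρ → σ is possible by free operations if and only if R_ν(ρ) ≥ R_ν(σ) for every density matrix ν. -/

import Mathlib

open scoped Matrix Kronecker ComplexOrder

noncomputable section

/-- A density matrix: positive semidefinite with unit trace. -/
def IsDensityMatrix {ι : Type*} [Fintype ι] (ρ : Matrix ι ι ℂ) : Prop :=
  ρ.PosSemidef ∧ ρ.trace = 1

/-- The trace norm `‖M‖₁ = Tr √(M† M)`. -/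
noncomputable def traceNorm {ι : Type*} [Fintype ι] [DecidableEq ι]
    (M : Matrix ι ι ℂ) : ℝ :=
  (((Matrix.posSemidef_conjTranspose_mul_self M).isHermitian.eigenvectorUnitary.1 *
      Matrix.diagonal (fun i => ((Real.sqrt
        ((Matrix.posSemidef_conjTranspose_mul_self M).isHermitian.eigenvalues i) : ℝ) : ℂ)) *
      (star (Matrix.posSemidef_conjTranspose_mul_self M).isHermitian.eigenvectorUnitary :
        Matrix ι ι ℂ)).trace).re

/-- The amplification `Λ ⊗ id_k` of a linear map on matrices. -/
def amplify {ι : Type*} [Fintype ι] [DecidableEq ι]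
    (Λ : Matrix ι ι ℂ →ₗ[ℂ] Matrix ι ι ℂ) (k : ℕ)
    (M : Matrix (ι × Fin k) (ι × Fin k) ℂ) : Matrix (ι × Fin k) (ι × Fin k) ℂ :=
  Matrix.of fun p q => Λ (Matrix.of fun i j => M (i, p.2) (j, q.2)) p.1 q.1

/-- A linear map on matrices is CPTP (a quantum channel) if all its amplifications
preserve positive semidefiniteness and it preserves the trace. -/
def IsCPTP {ι : Type*} [Fintype ι] [DecidableEq ι]
    (Λ : Matrix ι ι ℂ →ₗ[ℂ] Matrix ι ι ℂ) : Prop :=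
  (∀ (k : ℕ) (M : Matrix (ι × Fin k) (ι × Fin k) ℂ),
      M.PosSemidef → (amplify Λ k M).PosSemidef) ∧
  (∀ M, (Λ M).trace = M.trace)

/-- A quantum channel on a `d`-dimensional system. -/
structure QChannel (d : ℕ) where
  toFun : Matrix (Fin d) (Fin d) ℂ →ₗ[ℂ] Matrix (Fin d) (Fin d) ℂ
  cptp : IsCPTP toFun

/-- A resource theory: a convex compact set `F` of free states and a set `O` of free
operations containing the identity, closed under composition, preserving `F`, and
containing the state-preparation channel `ρ ↦ Tr(ρ)σ` for every free `σ`. -/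
structure ResourceTheory (d : ℕ) where
  F : Set (Matrix (Fin d) (Fin d) ℂ)
  O : Set (QChannel d)
  F_density : ∀ σ ∈ F, IsDensityMatrix σ
  F_convex : Convex ℝ F
  F_compact : IsCompact F
  id_mem : ∃ Λ ∈ O, ∀ ρ, Λ.toFun ρ = ρ
  comp_mem : ∀ Λ₁ ∈ O, ∀ Λ₂ ∈ O, ∃ Λ ∈ O, ∀ ρ, Λ.toFun ρ = Λ₂.toFun (Λ₁.toFun ρ)
  free_mapsto : ∀ Λ ∈ O, ∀ σ ∈ F, Λ.toFun σ ∈ F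
  prep_mem : ∀ σ ∈ F, ∃ Λ ∈ O, ∀ ρ : Matrix (Fin d) (Fin d) ℂ, Λ.toFun ρ = ρ.trace • σ

/-- `ρ → σ`: for every `ε > 0` some free operation maps `ρ` within trace-distance `ε` of `σ`. -/
def Converts {d : ℕ} (RT : ResourceTheory d) (ρ σ : Matrix (Fin d) (Fin d) ℂ) : Prop :=
  ∀ ε > 0, ∃ Λ ∈ RT.O, traceNorm (Λ.toFun ρ - σ) < ε

/-- A resource monotone: nonnegative on states, nonincreasing under free operations,
vanishing on free states. -/
def IsMonotone {d : ℕ} (RT : ResourceTheory d) (R : Matrix (Fin d) (Fin d) ℂ → ℝ) : Prop :=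
  (∀ ρ, IsDensityMatrix ρ → 0 ≤ R ρ) ∧
  (∀ ρ, IsDensityMatrix ρ → ∀ Λ ∈ RT.O, R (Λ.toFun ρ) ≤ R ρ) ∧
  (∀ σ ∈ RT.F, R σ = 0)

/-- The pure state `|ψ⟩⟨ψ|`. -/
def pureState {ι : Type*} (ψ : ι → ℂ) : Matrix ι ι ℂ :=
  Matrix.vecMulVec ψ (star ψ)

/-- `ψ` is a unit vector. -/
def IsUnitVec {ι : Type*} [Fintype ι] (ψ : ι → ℂ) : Prop :=
  ∑ i, Complex.normSq (ψ i) = 1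

/-- Trace-norm distance from `ρ` to a set of states. -/
noncomputable def distToSet {ι : Type*} [Fintype ι] [DecidableEq ι]
    (F : Set (Matrix ι ι ℂ)) (ρ : Matrix ι ι ℂ) : ℝ :=
  sInf ((fun μ => traceNorm (ρ - μ)) '' F)


/-- The monotone `R_ν(ρ) = inf_{Λ ∈ O} ‖Λ(ν) − ρ‖₁`. -/
noncomputable def Rnu {d : ℕ} (RT : ResourceTheory d)
    (ν ρ : Matrix (Fin d) (Fin d) ℂ) : ℝ :=
  sInf ((fun Λ : QChannel d => traceNorm (Λ.toFun ν - ρ)) '' RT.O)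


section AuxTN
open Matrix
open scoped ComplexOrder
open scoped MatrixOrder
variable {ι : Type*} [Fintype ι] [DecidableEq ι] {X : Matrix ι ι ℂ}

noncomputable def conjDiag (hX : X.IsHermitian) (g : ι → ℝ) : Matrix ι ι ℂ :=
  (hX.eigenvectorUnitary : Matrix ι ι ℂ) * diagonal ((↑) ∘ g) *
    star (hX.eigenvectorUnitary : Matrix ι ι ℂ)

variable (hX : X.IsHermitian) (g g' : ι → ℝ)

lemma star_mul_selfU : (star (hX.eigenvectorUnitary : Matrix ι ι ℂ)) * hX.eigenvectorUnitary = 1 := by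
  simp

lemma conjDiag_mul : conjDiag hX g * conjDiag hX g' = conjDiag hX (g * g') := by
  unfold conjDiag
  have key : ∀ A : Matrix ι ι ℂ,
      star (hX.eigenvectorUnitary : Matrix ι ι ℂ) * ((hX.eigenvectorUnitary : Matrix ι ι ℂ) * A) = A := by
    intro A; rw [← Matrix.mul_assoc, star_mul_selfU hX, Matrix.one_mul]
  simp only [Matrix.mul_assoc, key]
  rw [← Matrix.mul_assoc (diagonal _) (diagonal _), diagonal_mul_diagonal]
  have : (fun i => (Complex.ofReal ∘ g) i * (Complex.ofReal ∘ g') i) = ((↑) ∘ (g * g') : ι → ℂ) := by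
    funext i; simp
  rw [this]

lemma conjDiag_add : conjDiag hX g + conjDiag hX g' = conjDiag hX (g + g') := by
  unfold conjDiag
  rw [← Matrix.add_mul, ← Matrix.mul_add]
  congr 2
  rw [diagonal_add]
  have : (fun i => ((g i : ℂ) + (g' i : ℂ))) = ((↑) ∘ (g + g') : ι → ℂ) := by
    funext i; simp
  exact congrArg _ this

lemma conjDiag_one : conjDiag hX 1 = 1 := by
  unfold conjDiag
  have : diagonal ((↑) ∘ (1 : ι → ℝ)) = (1 : Matrix ι ι ℂ) := by
    have : ((↑) ∘ (1 : ι → ℝ) : ι → ℂ) = fun _ => 1 := by funext i; simp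
    rw [this, Matrix.diagonal_one]
  rw [this, Matrix.mul_one]
  simp

lemma conjDiag_psd (hg : ∀ i, 0 ≤ g i) : (conjDiag hX g).PosSemidef :=
  (Matrix.PosSemidef.diagonal (fun i => Complex.zero_le_real.2 (hg i))).mul_mul_conjTranspose_same _

lemma conjDiag_herm : (conjDiag hX g).IsHermitian := by
  have : (diagonal ((↑) ∘ g : ι → ℂ)).IsHermitian := by
    refine Matrix.isHermitian_diagonal_iff.2 fun i => ?_
    show star ((g i : ℂ)) = _
    simp [Complex.star_def, Complex.conj_ofReal]
  unfold conjDiag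
  exact Matrix.isHermitian_mul_mul_conjTranspose _ this

lemma conjDiag_trace : (conjDiag hX g).trace = ∑ i, (g i : ℂ) := by
  unfold conjDiag
  rw [trace_mul_cycle, star_mul_selfU hX, Matrix.one_mul, trace_diagonal]
  rfl

lemma conjDiag_eigen : conjDiag hX hX.eigenvalues = X := by
  rw [conjDiag]
  conv_rhs => rw [hX.spectral_theorem]
  rfl

lemma conjDiag_sub : conjDiag hX g - conjDiag hX g' = conjDiag hX (g - g') := by
  unfold conjDiag
  rw [← Matrix.sub_mul, ← Matrix.mul_sub]
  congr 2
  rw [diagonal_sub]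
  have : (fun i => (Complex.ofReal ∘ g) i - (Complex.ofReal ∘ g') i) = ((↑) ∘ (g - g') : ι → ℂ) := by
    funext i; simp
  exact congrArg _ this

lemma sqrt_congr {A B : Matrix ι ι ℂ} (hA : A.PosSemidef) (hB : B.PosSemidef) (h : A = B) :
    CFC.sqrt A = CFC.sqrt B := by subst h; rfl

lemma traceNorm_eq_sqrt (M : Matrix ι ι ℂ) : traceNorm M = (CFC.sqrt (Mᴴ * M)).trace.re := by
  have h0 : (0 : Matrix ι ι ℂ) ≤ Mᴴ * M := (Matrix.posSemidef_conjTranspose_mul_self M).nonneg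
  rw [CFC.sqrt_eq_real_sqrt _ h0, cfcₙ_eq_cfc, (Matrix.posSemidef_conjTranspose_mul_self M).isHermitian.cfc_eq,
    IsHermitian.cfc, Unitary.conjStarAlgAut_apply]
  rfl

lemma traceNorm_herm (hX : X.IsHermitian) :
    traceNorm X = ∑ i, |hX.eigenvalues i| := by
  have hS : (conjDiag hX (fun i => |hX.eigenvalues i|)).PosSemidef :=
    conjDiag_psd hX _ (fun i => abs_nonneg _)
  have hsq : (conjDiag hX (fun i => |hX.eigenvalues i|)) ^ 2 = Xᴴ * X := by
    rw [sq, conjDiag_mul]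
    have h1 : (fun i => |hX.eigenvalues i|) * (fun i => |hX.eigenvalues i|)
        = hX.eigenvalues * hX.eigenvalues := by
      funext i; exact abs_mul_abs_self _
    rw [h1, ← conjDiag_mul, conjDiag_eigen, hX.eq]
  have key : conjDiag hX (fun i => |hX.eigenvalues i|) = CFC.sqrt (Xᴴ * X) := by
    rw [← hsq]; exact (CFC.sqrt_sq _ hS.nonneg).symm
  rw [traceNorm_eq_sqrt, ← key, conjDiag_trace, Complex.re_sum]
  simp

lemma psd_diag_re {A : Matrix ι ι ℂ} (hA : A.PosSemidef) (i : ι) : 0 ≤ (A i i).re := by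
  have h := hA.diag_nonneg (i := i)
  simpa using (Complex.le_def.1 h).1

lemma psd_trace_re_nonneg {A : Matrix ι ι ℂ} (hA : A.PosSemidef) : 0 ≤ A.trace.re := by
  rw [Matrix.trace, Complex.re_sum]
  exact Finset.sum_nonneg fun i _ => psd_diag_re hA i

lemma traceNorm_nonneg' (M : Matrix ι ι ℂ) : 0 ≤ traceNorm M :=
  by rw [traceNorm_eq_sqrt]; exact psd_trace_re_nonneg (CFC.sqrt_nonneg _).posSemidef

lemma traceNorm_psd_eq {A : Matrix ι ι ℂ} (hA : A.PosSemidef) : traceNorm A = A.trace.re := by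
  rw [traceNorm_herm hA.1]
  have ht : A.trace = ∑ i, (hA.1.eigenvalues i : ℂ) :=
    (congrArg Matrix.trace (conjDiag_eigen hA.1)).symm.trans (conjDiag_trace hA.1 _)
  rw [ht, Complex.re_sum]
  simp only [Complex.ofReal_re]
  exact Finset.sum_congr rfl fun i _ => abs_of_nonneg (hA.eigenvalues_nonneg i)

lemma traceNorm_neg' (M : Matrix ι ι ℂ) : traceNorm (-M) = traceNorm M := by
  rw [traceNorm_eq_sqrt, traceNorm_eq_sqrt]
  rw [sqrt_congr (Matrix.posSemidef_conjTranspose_mul_self (-M))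
    (Matrix.posSemidef_conjTranspose_mul_self M) (by simp)]

lemma traceNorm_zero' : traceNorm (0 : Matrix ι ι ℂ) = 0 := by
  rw [traceNorm_psd_eq Matrix.PosSemidef.zero]
  simp

lemma exists_dual (hX : X.IsHermitian) :
    ∃ P : Matrix ι ι ℂ, (1 - P).PosSemidef ∧ (1 + P).PosSemidef ∧
      ((P * X).trace).re = traceNorm X := by
  set s : ι → ℝ := fun i => if 0 ≤ hX.eigenvalues i then 1 else -1 with hs
  refine ⟨conjDiag hX s, ?_, ?_, ?_⟩
  · rw [← conjDiag_one hX, conjDiag_sub]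
    refine conjDiag_psd hX _ fun i => ?_
    simp only [Pi.sub_apply, Pi.one_apply, hs]
    split <;> norm_num
  · rw [← conjDiag_one hX, conjDiag_add]
    refine conjDiag_psd hX _ fun i => ?_
    simp only [Pi.add_apply, Pi.one_apply, hs]
    split <;> norm_num
  · have hPX : conjDiag hX s * X = conjDiag hX (s * hX.eigenvalues) := by
      rw [← conjDiag_mul, conjDiag_eigen]
    rw [hPX]
    have h1 : s * hX.eigenvalues = fun i => |hX.eigenvalues i| := by
      funext i
      simp only [Pi.mul_apply, hs]
      split
      · rw [one_mul, abs_of_nonneg ‹_›]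
      · rw [neg_one_mul, abs_of_neg (lt_of_not_ge ‹_›)]
    rw [h1, conjDiag_trace, Complex.re_sum, traceNorm_herm hX]
    simp

lemma dual_le (hX : X.IsHermitian) {P : Matrix ι ι ℂ}
    (h1 : (1 - P).PosSemidef) (h2 : (1 + P).PosSemidef) :
    ((P * X).trace).re ≤ traceNorm X := by
  set U := (hX.eigenvectorUnitary : Matrix ι ι ℂ) with hU
  have hU1 : star U * U = 1 := star_mul_selfU hX
  set Q := star U * P * U with hQ
  have htr : (P * X).trace = ∑ i, Q i i * (hX.eigenvalues i : ℂ) := by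
    have hPX : (P * X).trace = (P * conjDiag hX hX.eigenvalues).trace := by
      rw [conjDiag_eigen]
    rw [hPX, conjDiag]
    simp only [← Matrix.mul_assoc, ← hU]
    rw [trace_mul_comm]
    simp only [← Matrix.mul_assoc, ← hQ]
    simp [Matrix.trace, Matrix.diag, Matrix.mul_diagonal]
  have hcon : ∀ (R : Matrix ι ι ℂ), R.PosSemidef → (star U * R * U).PosSemidef := by
    intro R hR
    exact hR.conjTranspose_mul_mul_same U
  have h1' : (1 - Q).PosSemidef := by
    have := hcon _ h1
    have he : star U * (1 - P) * U = 1 - Q := by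
      rw [Matrix.mul_sub, Matrix.sub_mul, Matrix.mul_one, hU1, hQ]
    rwa [he] at this
  have h2' : (1 + Q).PosSemidef := by
    have := hcon _ h2
    have he : star U * (1 + P) * U = 1 + Q := by
      rw [Matrix.mul_add, Matrix.add_mul, Matrix.mul_one, hU1, hQ]
    rwa [he] at this
  have hQb : ∀ i, |(Q i i).re| ≤ 1 := by
    intro i
    have a1 := psd_diag_re h1' i
    have a2 := psd_diag_re h2' i
    simp only [Matrix.sub_apply, Matrix.add_apply, Matrix.one_apply_eq, Complex.sub_re,
      Complex.add_re, Complex.one_re] at a1 a2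
    rw [abs_le]
    constructor <;> linarith
  rw [htr, Complex.re_sum, traceNorm_herm hX]
  refine Finset.sum_le_sum fun i _ => ?_
  have : (Q i i * (hX.eigenvalues i : ℂ)).re = (Q i i).re * hX.eigenvalues i := by
    simp [Complex.mul_re]
  rw [this]
  calc (Q i i).re * hX.eigenvalues i ≤ |(Q i i).re * hX.eigenvalues i| := le_abs_self _
    _ = |(Q i i).re| * |hX.eigenvalues i| := abs_mul _ _
    _ ≤ 1 * |hX.eigenvalues i| := by
        exact mul_le_mul_of_nonneg_right (hQb i) (abs_nonneg _)
    _ = |hX.eigenvalues i| := one_mul _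

lemma traceNorm_add_le {Y : Matrix ι ι ℂ} (hX : X.IsHermitian) (hY : Y.IsHermitian) :
    traceNorm (X + Y) ≤ traceNorm X + traceNorm Y := by
  obtain ⟨P, h1, h2, hP⟩ := exists_dual (hX.add hY)
  rw [← hP, Matrix.mul_add, trace_add, Complex.add_re]
  exact add_le_add (dual_le hX h1 h2) (dual_le hY h1 h2)

lemma jordan (hX : X.IsHermitian) : ∃ A B : Matrix ι ι ℂ, A.PosSemidef ∧ B.PosSemidef ∧
    X = A - B ∧ A.trace.re + B.trace.re = traceNorm X := by
  refine ⟨conjDiag hX (fun i => max (hX.eigenvalues i) 0),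
    conjDiag hX (fun i => max (-hX.eigenvalues i) 0), conjDiag_psd hX _ (fun i => le_max_right _ _),
    conjDiag_psd hX _ (fun i => le_max_right _ _), ?_, ?_⟩
  · rw [conjDiag_sub]
    have : ((fun i => max (hX.eigenvalues i) 0) - fun i => max (-hX.eigenvalues i) 0)
        = hX.eigenvalues := by
      funext i
      simp only [Pi.sub_apply]
      rcases le_total 0 (hX.eigenvalues i) with h | h
      · rw [max_eq_left h, max_eq_right (by linarith)]; ring
      · rw [max_eq_right h, max_eq_left (by linarith)]; ring
    rw [this, conjDiag_eigen]
  · rw [conjDiag_trace, conjDiag_trace, Complex.re_sum, Complex.re_sum, traceNorm_herm hX]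
    simp only [Complex.ofReal_re]
    rw [← Finset.sum_add_distrib]
    refine Finset.sum_congr rfl fun i _ => ?_
    rcases le_total 0 (hX.eigenvalues i) with h | h
    · rw [max_eq_left h, max_eq_right (by linarith), abs_of_nonneg h]; ring
    · rw [max_eq_right h, max_eq_left (by linarith), abs_of_nonpos h]; ring

lemma herm_of_pos_map (L : Matrix ι ι ℂ →ₗ[ℂ] Matrix ι ι ℂ)
    (pos : ∀ M : Matrix ι ι ℂ, M.PosSemidef → (L M).PosSemidef) (hX : X.IsHermitian) :
    (L X).IsHermitian := by
  obtain ⟨A, B, hA, hB, hAB, -⟩ := jordan hX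
  have h0 : L X = L A - L B := by rw [hAB, map_sub]
  rw [h0]
  exact ((pos A hA).1).sub ((pos B hB).1)

lemma traceNorm_map_le (L : Matrix ι ι ℂ →ₗ[ℂ] Matrix ι ι ℂ)
    (pos : ∀ M : Matrix ι ι ℂ, M.PosSemidef → (L M).PosSemidef)
    (tr : ∀ M : Matrix ι ι ℂ, (L M).trace = M.trace) (hX : X.IsHermitian) :
    traceNorm (L X) ≤ traceNorm X := by
  obtain ⟨A, B, hA, hB, hAB, hsum⟩ := jordan hX
  have h0 : L X = L A + -(L B) := by rw [hAB, map_sub, sub_eq_add_neg]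
  rw [h0]
  calc traceNorm (L A + -(L B)) ≤ traceNorm (L A) + traceNorm (-(L B)) :=
        traceNorm_add_le (pos A hA).1 ((pos B hB).1.neg)
    _ = (L A).trace.re + (L B).trace.re := by
        rw [traceNorm_neg', traceNorm_psd_eq (pos A hA), traceNorm_psd_eq (pos B hB)]
    _ = A.trace.re + B.trace.re := by rw [tr, tr]
    _ = traceNorm X := hsum

end AuxTN

lemma cptp_pos {d : ℕ} (Λ : QChannel d) {M : Matrix (Fin d) (Fin d) ℂ}
    (hM : M.PosSemidef) : (Λ.toFun M).PosSemidef := by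
  have hM' : (M.submatrix (Prod.fst : Fin d × Fin 1 → Fin d) Prod.fst).PosSemidef :=
    hM.submatrix _
  have h := Λ.cptp.1 1 _ hM'
  have he : Λ.toFun M = (amplify Λ.toFun 1 (M.submatrix Prod.fst Prod.fst)).submatrix
      (fun i => (i, 0)) (fun i => (i, 0)) := rfl
  rw [he]
  exact h.submatrix _

theorem Rnu_complete_set' {d : ℕ} (RT : ResourceTheory d)
    (ρ σ : Matrix (Fin d) (Fin d) ℂ) (hρ : IsDensityMatrix ρ) (hσ : IsDensityMatrix σ) :
    Converts RT ρ σ ↔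
      ∀ ν : Matrix (Fin d) (Fin d) ℂ, IsDensityMatrix ν → Rnu RT ν σ ≤ Rnu RT ν ρ := by
  obtain ⟨Λ₀, hΛ₀, hid⟩ := RT.id_mem
  have hbd : ∀ τ ν : Matrix (Fin d) (Fin d) ℂ,
      BddBelow ((fun Λ : QChannel d => traceNorm (Λ.toFun ν - τ)) '' RT.O) := by
    intro τ ν
    refine ⟨0, ?_⟩
    rintro x ⟨Λ, -, rfl⟩
    exact traceNorm_nonneg' _
  have hne : ∀ τ ν : Matrix (Fin d) (Fin d) ℂ,
      ((fun Λ : QChannel d => traceNorm (Λ.toFun ν - τ)) '' RT.O).Nonempty :=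
    fun τ ν => ⟨_, ⟨Λ₀, hΛ₀, rfl⟩⟩
  constructor
  · intro hconv ν hν
    rw [Rnu, Rnu]
    refine le_of_forall_pos_le_add fun ε hε => ?_
    obtain ⟨x, hx, hxlt⟩ := Real.lt_sInf_add_pos (hne ρ ν) (half_pos hε)
    obtain ⟨Λ, hΛ, rfl⟩ := hx
    obtain ⟨Λ', hΛ', hΛ'lt⟩ := hconv (ε/2) (half_pos hε)
    obtain ⟨Λ'', hΛ'', hcomp⟩ := RT.comp_mem Λ hΛ Λ' hΛ'
    have herm1 : (Λ.toFun ν - ρ).IsHermitian := ((cptp_pos Λ hν.1).1).sub hρ.1.1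
    have herm2 : (Λ'.toFun (Λ.toFun ν - ρ)).IsHermitian :=
      herm_of_pos_map Λ'.toFun (fun M hM => cptp_pos Λ' hM) herm1
    have herm3 : (Λ'.toFun ρ - σ).IsHermitian := ((cptp_pos Λ' hρ.1).1).sub hσ.1.1
    have e1 : Λ''.toFun ν - σ = Λ'.toFun (Λ.toFun ν - ρ) + (Λ'.toFun ρ - σ) := by
      rw [hcomp, map_sub]
      abel
    have key : traceNorm (Λ''.toFun ν - σ) ≤ traceNorm (Λ.toFun ν - ρ) + ε / 2 := by
      rw [e1]
      calc traceNorm (Λ'.toFun (Λ.toFun ν - ρ) + (Λ'.toFun ρ - σ))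
          ≤ traceNorm (Λ'.toFun (Λ.toFun ν - ρ)) + traceNorm (Λ'.toFun ρ - σ) :=
            traceNorm_add_le herm2 herm3
        _ ≤ traceNorm (Λ.toFun ν - ρ) + ε / 2 :=
            add_le_add (traceNorm_map_le Λ'.toFun (fun M hM => cptp_pos Λ' hM)
              (fun M => Λ'.cptp.2 M) herm1) hΛ'lt.le
    have hle : sInf ((fun Λ : QChannel d => traceNorm (Λ.toFun ν - σ)) '' RT.O)
        ≤ traceNorm (Λ''.toFun ν - σ) := csInf_le (hbd σ ν) ⟨Λ'', hΛ'', rfl⟩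
    linarith
  · intro h ε hε
    have h1 := h ρ hρ
    have hzero : traceNorm (Λ₀.toFun ρ - ρ) = 0 := by
      rw [hid, sub_self, traceNorm_zero']
    have h2 : Rnu RT ρ ρ ≤ 0 := by
      rw [Rnu]
      calc sInf ((fun Λ : QChannel d => traceNorm (Λ.toFun ρ - ρ)) '' RT.O)
          ≤ traceNorm (Λ₀.toFun ρ - ρ) := csInf_le (hbd ρ ρ) ⟨Λ₀, hΛ₀, rfl⟩
        _ = 0 := hzero
    have h3 : Rnu RT ρ σ < ε := lt_of_le_of_lt (h1.trans h2) hε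
    rw [Rnu] at h3
    obtain ⟨x, hx, hlt⟩ := exists_lt_of_csInf_lt (hne σ ρ) h3
    obtain ⟨Λ, hΛ, rfl⟩ := hx
    exact ⟨Λ, hΛ, hlt⟩

/-- The family `{R_ν}` is a complete set of resource monotones:
`ρ → σ` if and only if `R_ν(ρ) ≥ R_ν(σ)` for every density matrix `ν`. -/
theorem Rnu_complete_set {d : ℕ} (RT : ResourceTheory d)
    (ρ σ : Matrix (Fin d) (Fin d) ℂ) (hρ : IsDensityMatrix ρ) (hσ : IsDensityMatrix σ) :
    Converts RT ρ σ ↔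
      ∀ ν : Matrix (Fin d) (Fin d) ℂ, IsDensityMatrix ν → Rnu RT ν σ ≤ Rnu RT ν ρ :=
  Rnu_complete_set' RT ρ σ hρ hσ
end
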